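/- arXiv:0808.1232 — 3 statements merged into one kernel-verified Lean document; each statement's English description precedes it below -/
import Mathlib

section
/- Let G be a finite group and X, Y finite G-sets. If for every subgroup H ≤ G the number of H-fixed points of X equals the number of H-fixed points of Y, then X and Y are isomorphic as G-sets. -/
open MulAction

section BurnsideAux

variable {G : Type*} [Group G]

private lemma smul_eq_of_stab_eq {X Y : Type*} [MulAction G X] [MulAction G Y]
    {x : X} {y : Y} (hst : stabilizer G x = stabilizer G y) {a b : G}
    (hab : a • x = b • x) : a • y = b • y := by
  have hm : b⁻¹ * a ∈ stabilizer G x := by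
    rw [mem_stabilizer_iff, mul_smul, inv_smul_eq_iff]; exact hab
  rw [hst, mem_stabilizer_iff, mul_smul, inv_smul_eq_iff] at hm
  exact hm

private lemma choose_smul {Y : Type*} [MulAction G Y] (y : Y) (z : orbit G y) :
    (mem_orbit_iff.mp z.2).choose • y = (z : Y) :=
  (mem_orbit_iff.mp z.2).choose_spec

private noncomputable def orbitEquivOfStabEq {X Y : Type*} [MulAction G X] [MulAction G Y]
    {x : X} {y : Y} (hst : stabilizer G x = stabilizer G y) :
    orbit G x ≃ orbit G y where
  toFun z := ⟨(mem_orbit_iff.mp z.2).choose • y, mem_orbit y _⟩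
  invFun z := ⟨(mem_orbit_iff.mp z.2).choose • x, mem_orbit x _⟩
  left_inv z := by
    apply Subtype.ext
    have h1 := choose_smul x z
    have h2 := choose_smul y (⟨(mem_orbit_iff.mp z.2).choose • y, mem_orbit y _⟩ : orbit G y)
    exact (smul_eq_of_stab_eq hst.symm h2).trans h1
  right_inv z := by
    apply Subtype.ext
    have h1 := choose_smul y z
    have h2 := choose_smul x (⟨(mem_orbit_iff.mp z.2).choose • x, mem_orbit x _⟩ : orbit G x)
    exact (smul_eq_of_stab_eq hst h2).trans h1

private lemma orbitEquivOfStabEq_equivariant {X Y : Type*} [MulAction G X] [MulAction G Y]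
    {x : X} {y : Y} (hst : stabilizer G x = stabilizer G y) (g : G) (z : orbit G x) :
    orbitEquivOfStabEq hst (g • z) = g • orbitEquivOfStabEq hst z := by
  apply Subtype.ext
  show (mem_orbit_iff.mp (g • z).2).choose • y = g • ((mem_orbit_iff.mp z.2).choose • y)
  have h1 := choose_smul x z
  have h3 := choose_smul x (g • z)
  have hx : (mem_orbit_iff.mp (g • z).2).choose • x = (g * (mem_orbit_iff.mp z.2).choose) • x := by
    rw [mul_smul, h1, h3, orbit.coe_smul]
  have := smul_eq_of_stab_eq hst hx
  rw [this, mul_smul]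

/-- Equivalence between fixed points of an invariant subtype and the corresponding
subset-level description. -/
private def fixEquiv {X : Type*} [MulAction G X] (S : Set X) [MulAction G ↥S]
    (hcoe : ∀ (g : G) (z : ↥S), ((g • z : ↥S) : X) = g • (z : X)) (K : Subgroup G) :
    {z : ↥S // ∀ k ∈ K, k • z = z} ≃ {z : X // z ∈ S ∧ ∀ k ∈ K, k • z = z} where
  toFun w := ⟨↑w.1, w.1.2, fun k hk => by
    rw [← hcoe]; exact congrArg Subtype.val (w.2 k hk)⟩
  invFun w := ⟨⟨w.1, w.2.1⟩, fun k hk => Subtype.ext (by rw [hcoe]; exact w.2.2 k hk)⟩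
  left_inv w := by apply Subtype.ext; apply Subtype.ext; rfl
  right_inv w := rfl

private lemma card_fix_split {X : Type*} [Finite X] (P Q : X → Prop) :
    Nat.card {z : X // Q z} =
      Nat.card {z : X // Q z ∧ P z} + Nat.card {z : X // Q z ∧ ¬ P z} := by
  classical
  rw [← Nat.card_sum]
  exact Nat.card_congr
    ((Equiv.sumCompl fun w : Subtype Q => P ↑w).symm.trans
      (Equiv.sumCongr (Equiv.subtypeSubtypeEquivSubtypeInter Q P)
        (Equiv.subtypeSubtypeEquivSubtypeInter Q fun z => ¬ P z)))

private lemma subgroup_eq_of_le_of_card_le [Finite G] {H K : Subgroup G} (hle : H ≤ K)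
    (hc : Nat.card K ≤ Nat.card H) : H = K := by
  apply SetLike.coe_injective
  apply Set.eq_of_subset_of_ncard_le hle
  rwa [← Nat.card_coe_set_eq, ← Nat.card_coe_set_eq]

private lemma card_subtype_lt' {X : Type*} [Finite X] {p : X → Prop} {x : X} (hx : ¬ p x) :
    Nat.card {z : X // p z} < Nat.card X := by
  have h1 : Nat.card {z : X // p z} = (setOf p).ncard := Nat.card_coe_set_eq _
  rw [h1, ← Set.ncard_univ]
  refine Set.ncard_lt_ncard ?_ Set.finite_univ
  refine Set.ssubset_univ_iff.mpr fun hequ => hx ?_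
  show x ∈ {z | p z}
  exact (Set.ext_iff.mp hequ x).mpr (Set.mem_univ x)

private lemma exists_stab_eq {X Y : Type*} [Finite X] [Finite Y] [Finite G]
    [MulAction G X] [MulAction G Y]
    (h : ∀ H : Subgroup G,
      Nat.card {x : X // ∀ k ∈ H, k • x = x} = Nat.card {y : Y // ∀ k ∈ H, k • y = y})
    (x : X) (hmax : ∀ y : Y, Nat.card (stabilizer G y) ≤ Nat.card (stabilizer G x)) :
    ∃ y : Y, stabilizer G x = stabilizer G y := by
  have hx : Nonempty {z : X // ∀ k ∈ stabilizer G x, k • z = z} :=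
    ⟨⟨x, fun k hk => mem_stabilizer_iff.mp hk⟩⟩
  have hpos : 0 < Nat.card {z : Y // ∀ k ∈ stabilizer G x, k • z = z} := by
    rw [← h]
    exact Nat.card_pos_iff.mpr ⟨hx, inferInstance⟩
  obtain ⟨⟨y, hy⟩⟩ := (Nat.card_pos_iff.mp hpos).1
  have hle : stabilizer G x ≤ stabilizer G y := fun k hk =>
    mem_stabilizer_iff.mpr (hy k hk)
  exact ⟨y, subgroup_eq_of_le_of_card_le hle (hmax y)⟩

/-- The complement of an orbit as a `SubMulAction`. -/
private def complOrbit {X : Type*} [MulAction G X] (x : X) : SubMulAction G X where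
  carrier := (orbit G x)ᶜ
  smul_mem' := by
    intro g z hz hmem
    apply hz
    obtain ⟨c, hc⟩ := mem_orbit_iff.mp hmem
    exact mem_orbit_iff.mpr ⟨g⁻¹ * c, by rw [mul_smul, hc, inv_smul_smul]⟩

private theorem burnside_aux (G : Type*) [Group G] [Finite G] :
    ∀ (n : ℕ) (X : Type u) (Y : Type v) [Finite X] [Finite Y]
      [MulAction G X] [MulAction G Y], Nat.card X = n →
      (∀ H : Subgroup G,
        Nat.card {x : X // ∀ h ∈ H, h • x = x} =
          Nat.card {y : Y // ∀ h ∈ H, h • y = y}) →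
      ∃ e : X ≃ Y, ∀ (g : G) (x : X), e (g • x) = g • e x := by
  intro n
  induction n using Nat.strong_induction_on with
  | _ n IH =>
    intro X Y _ _ _ _ hn h
    classical
    -- card X = card Y
    have ebotX : Nat.card {x : X // ∀ k ∈ (⊥ : Subgroup G), k • x = x} = Nat.card X :=
      Nat.card_congr (Equiv.subtypeUnivEquiv fun z k hk => by
        rw [Subgroup.mem_bot.mp hk, one_smul])
    have ebotY : Nat.card {y : Y // ∀ k ∈ (⊥ : Subgroup G), k • y = y} = Nat.card Y :=
      Nat.card_congr (Equiv.subtypeUnivEquiv fun z k hk => by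
        rw [Subgroup.mem_bot.mp hk, one_smul])
    have hXY : Nat.card X = Nat.card Y := by rw [← ebotX, ← ebotY]; exact h ⊥
    by_cases hne : Nonempty X
    swap
    · haveI : IsEmpty X := not_nonempty_iff.mp hne
      haveI : IsEmpty Y := by
        rcases Nat.card_eq_zero.mp (hXY ▸ Nat.card_eq_zero.mpr (Or.inl ‹_›)) with h' | h'
        · exact h'
        · exact absurd ‹Finite Y› h'.not_finite
      exact ⟨Equiv.equivOfIsEmpty X Y, fun g x => (IsEmpty.false x).elim⟩
    · haveI : Nonempty (X ⊕ Y) := ⟨Sum.inl hne.some⟩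
      obtain ⟨b, hb⟩ := Finite.exists_max
        (Sum.elim (fun x : X => Nat.card (stabilizer G x))
          (fun y : Y => Nat.card (stabilizer G y)))
      -- obtain x : X, y : Y with equal stabilizers
      obtain ⟨x, y, hst⟩ : ∃ (x : X) (y : Y), stabilizer G x = stabilizer G y := by
        cases b with
        | inl x =>
          obtain ⟨y, hy⟩ := exists_stab_eq h x fun y => hb (Sum.inr y)
          exact ⟨x, y, hy⟩
        | inr y =>
          obtain ⟨x, hx⟩ := exists_stab_eq (fun H => (h H).symm) y fun x => hb (Sum.inl x)
          exact ⟨x, y, hx.symm⟩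
      set SX : SubMulAction G X := complOrbit x with hSX
      set SY : SubMulAction G Y := complOrbit y with hSY
      have hSXc : (SX : Set X) = (orbit G x)ᶜ := rfl
      have hSYc : (SY : Set Y) = (orbit G y)ᶜ := rfl
      -- fixed point counts of orbits agree
      have horb : ∀ K : Subgroup G,
          Nat.card {z : X // (∀ k ∈ K, k • z = z) ∧ z ∈ orbit G x} =
            Nat.card {z : Y // (∀ k ∈ K, k • z = z) ∧ z ∈ orbit G y} := by
        intro K
        have e1 := fixEquiv (G := G) (orbit G x) (fun g z => rfl) K
        have e2 := fixEquiv (G := G) (orbit G y) (fun g z => rfl) K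
        have emid : {z : ↥(orbit G x) // ∀ k ∈ K, k • z = z} ≃
            {z : ↥(orbit G y) // ∀ k ∈ K, k • z = z} := by
          refine Equiv.subtypeEquiv (orbitEquivOfStabEq hst) fun w => ⟨fun hw k hk => ?_, fun hw k hk => ?_⟩
          · rw [← orbitEquivOfStabEq_equivariant hst, hw k hk]
          · apply (orbitEquivOfStabEq hst).injective
            rw [orbitEquivOfStabEq_equivariant hst, hw k hk]
        refine Nat.card_congr ?_
        refine ((Equiv.subtypeEquivRight fun z => and_comm).trans (e1.symm.trans (emid.trans (e2.trans (Equiv.subtypeEquivRight fun z => and_comm)))))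
      -- fixed point counts of complements agree
      have hcompl : ∀ K : Subgroup G,
          Nat.card {z : ↥SX // ∀ k ∈ K, k • z = z} =
            Nat.card {z : ↥SY // ∀ k ∈ K, k • z = z} := by
        intro K
        have eX := fixEquiv (G := G) (SX : Set X) (fun g z => rfl) K
        have eY := fixEquiv (G := G) (SY : Set Y) (fun g z => rfl) K
        have splitX := card_fix_split (fun z : X => z ∈ orbit G x) (fun z => ∀ k ∈ K, k • z = z)
        have splitY := card_fix_split (fun z : Y => z ∈ orbit G y) (fun z => ∀ k ∈ K, k • z = z)
        have hXf : Nat.card {z : ↥SX // ∀ k ∈ K, k • z = z} =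
            Nat.card {z : X // (∀ k ∈ K, k • z = z) ∧ ¬ z ∈ orbit G x} := by
          refine Nat.card_congr (eX.trans (Equiv.subtypeEquivRight fun z => ?_))
          rw [hSXc]; exact ⟨fun hz => ⟨hz.2, hz.1⟩, fun hz => ⟨hz.2, hz.1⟩⟩
        have hYf : Nat.card {z : ↥SY // ∀ k ∈ K, k • z = z} =
            Nat.card {z : Y // (∀ k ∈ K, k • z = z) ∧ ¬ z ∈ orbit G y} := by
          refine Nat.card_congr (eY.trans (Equiv.subtypeEquivRight fun z => ?_))
          rw [hSYc]; exact ⟨fun hz => ⟨hz.2, hz.1⟩, fun hz => ⟨hz.2, hz.1⟩⟩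
        rw [hXf, hYf]
        have := h K
        rw [splitX, splitY, horb K] at this
        exact Nat.add_left_cancel this
      -- apply induction hypothesis to complements
      have hlt : Nat.card ↥SX < n := by
        rw [← hn]
        exact card_subtype_lt' (x := x) (by rw [hSXc] at *; exact fun hc => hc (mem_orbit_self x))
      obtain ⟨e', he'⟩ := IH (Nat.card ↥SX) hlt ↥SX ↥SY rfl hcompl
      -- assemble the global equivalence
      let eo := orbitEquivOfStabEq hst
      let E : X ≃ Y :=
        (Equiv.Set.sumCompl (orbit G x)).symm.trans
          ((eo.sumCongr e').trans (Equiv.Set.sumCompl (orbit G y)))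
      refine ⟨E, fun g z => ?_⟩
      by_cases hz : z ∈ orbit G x
      · have hgz : g • z ∈ orbit G x := by
          obtain ⟨c, hc⟩ := mem_orbit_iff.mp hz
          exact mem_orbit_iff.mpr ⟨g * c, by rw [mul_smul, hc]⟩
        show ((Equiv.Set.sumCompl (orbit G y)) ((eo.sumCongr e')
          ((Equiv.Set.sumCompl (orbit G x)).symm (g • z)))) = g • ((Equiv.Set.sumCompl (orbit G y)) ((eo.sumCongr e')
          ((Equiv.Set.sumCompl (orbit G x)).symm z)))
        rw [Equiv.Set.sumCompl_symm_apply_of_mem hz, Equiv.Set.sumCompl_symm_apply_of_mem hgz]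
        have : (⟨g • z, hgz⟩ : orbit G x) = g • (⟨z, hz⟩ : orbit G x) := rfl
        rw [this]
        show ((orbitEquivOfStabEq hst (g • ⟨z, hz⟩) : orbit G y) : Y) = g • ((orbitEquivOfStabEq hst ⟨z, hz⟩ : orbit G y) : Y)
        rw [orbitEquivOfStabEq_equivariant hst]
        rfl
      · have hgz : ¬ g • z ∈ orbit G x := fun hc => hz (by
          obtain ⟨c, hcc⟩ := mem_orbit_iff.mp hc
          exact mem_orbit_iff.mpr ⟨g⁻¹ * c, by rw [mul_smul, hcc, inv_smul_smul]⟩)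
        show ((Equiv.Set.sumCompl (orbit G y)) ((eo.sumCongr e')
          ((Equiv.Set.sumCompl (orbit G x)).symm (g • z)))) = g • ((Equiv.Set.sumCompl (orbit G y)) ((eo.sumCongr e')
          ((Equiv.Set.sumCompl (orbit G x)).symm z)))
        rw [Equiv.Set.sumCompl_symm_apply_of_notMem hz, Equiv.Set.sumCompl_symm_apply_of_notMem hgz]
        have : (⟨g • z, hgz⟩ : ↥(orbit G x)ᶜ) = g • (⟨z, hz⟩ : ↥SX) := rfl
        rw [this]
        show ((e' (g • (⟨z, hz⟩ : ↥SX)) : ↥SY) : Y) = g • ((e' (⟨z, hz⟩ : ↥SX) : ↥SY) : Y)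
        rw [he' g ⟨z, hz⟩]
        rfl

end BurnsideAux

/-- Burnside's theorem: two finite `G`-sets with the same number of `H`-fixed
points for every subgroup `H ≤ G` are isomorphic as `G`-sets. -/
theorem gset_iso_of_fixedPoints_card_eq
    (G X Y : Type*) [Group G] [Fintype G] [Fintype X] [Fintype Y]
    [MulAction G X] [MulAction G Y]
    (h : ∀ H : Subgroup G,
      Nat.card {x : X // ∀ h ∈ H, h • x = x} =
        Nat.card {y : Y // ∀ h ∈ H, h • y = y}) :
    ∃ e : X ≃ Y, ∀ (g : G) (x : X), e (g • x) = g • e x := by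
  exact burnside_aux G (Nat.card X) X Y rfl h
end

section
/- Let A be a finite abelian group of odd order and G = A ⋊ ⟨i⟩ the semidirect product where i acts on A by inversion. Then for every subgroup N ≤ A, the subgroup ⟨N, i⟩ of G is self-normalizing, i.e., N_G(⟨N,i⟩) = ⟨N,i⟩. -/
/-- If `i` is an involution normalizing `M`, then every element of `M ⊔ ⟨i⟩`
is of the form `m` or `m * i⁻¹` with `m ∈ M`. -/
theorem aux_decomp {G : Type*} [Group G] (i : G) (hi : i * i = 1)
    (M : Subgroup G) (hM : ∀ a ∈ M, i * a * i⁻¹ ∈ M) :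
    ∀ g ∈ M ⊔ Subgroup.zpowers i, g ∈ M ∨ g * i ∈ M := by
  have hii : i⁻¹ = i := inv_eq_of_mul_eq_one_right hi
  let K : Subgroup G :=
  { carrier := {g | g ∈ M ∨ g * i ∈ M}
    one_mem' := Or.inl M.one_mem
    mul_mem' := by
      rintro a b (ha | ha) (hb | hb)
      · exact Or.inl (M.mul_mem ha hb)
      · refine Or.inr ?_
        rw [mul_assoc]
        exact M.mul_mem ha hb
      · refine Or.inr ?_
        have h := M.mul_mem ha (hM b hb)
        have e : (a * i) * (i * b * i⁻¹) = a * b * i := by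
          rw [hii]
          calc (a * i) * (i * b * i) = a * (i * i) * (b * i) := by group
          _ = a * b * i := by rw [hi, mul_one, mul_assoc]
        rwa [e] at h
      · refine Or.inl ?_
        have h := M.mul_mem ha (hM (b * i) hb)
        have e : (a * i) * (i * (b * i) * i⁻¹) = a * b := by
          rw [hii]
          calc (a * i) * (i * (b * i) * i) = a * (i * i) * b * (i * i) := by group
          _ = a * b := by rw [hi, mul_one, mul_one]
        rwa [e] at h
    inv_mem' := by
      rintro a (ha | ha)
      · exact Or.inl (M.inv_mem ha)
      · refine Or.inr ?_
        have h := hM _ (M.inv_mem ha)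
        have e : i * (a * i)⁻¹ * i⁻¹ = a⁻¹ * i := by
          rw [show i * (a * i)⁻¹ * i⁻¹ = a⁻¹ * i⁻¹ by group, hii]
        rwa [e] at h }
  have hK : M ⊔ Subgroup.zpowers i ≤ K := by
    apply sup_le
    · intro x hx; exact Or.inl hx
    · rw [Subgroup.zpowers_le]
      exact Or.inr (by rw [hi]; exact M.one_mem)
  exact fun g hg => hK hg

/-- In the generalized dihedral group `G = A ⋊ ⟨i⟩` of a finite abelian group
`A` of odd order (with `i` acting by inversion), the subgroup `⟨N, i⟩` is
self-normalizing for every subgroup `N ≤ A`. -/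
theorem gen_dihedral_self_normalizing
    (G : Type*) [Group G] [Fintype G] (A : Subgroup G) (i : G)
    (hcomm : ∀ a ∈ A, ∀ b ∈ A, a * b = b * a)
    (hodd : Odd (Nat.card A))
    (hi : i * i = 1) (hiA : i ∉ A)
    (hinv : ∀ a ∈ A, i * a * i⁻¹ = a⁻¹)
    (hgen : A ⊔ Subgroup.zpowers i = ⊤)
    (N : Subgroup G) (hN : N ≤ A) :
    Subgroup.normalizer ((N ⊔ Subgroup.zpowers i : Subgroup G) : Set G) = N ⊔ Subgroup.zpowers i := by
  have hii : i⁻¹ = i := inv_eq_of_mul_eq_one_right hi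
  have hAinv : ∀ a ∈ A, i * a * i⁻¹ ∈ A := fun a ha => by
    rw [hinv a ha]; exact A.inv_mem ha
  have hNinv : ∀ a ∈ N, i * a * i⁻¹ ∈ N := fun a ha => by
    rw [hinv a (hN ha)]; exact N.inv_mem ha
  have hdecA : ∀ g : G, g ∈ A ∨ g * i ∈ A := fun g =>
    aux_decomp i hi A hAinv g (by rw [hgen]; trivial)
  -- conjugation formula
  have hconj : ∀ a ∈ A, a * i * a⁻¹ = a * a * i := by
    intro a ha
    have h := hinv a⁻¹ (A.inv_mem ha)
    calc a * i * a⁻¹ = a * (i * a⁻¹ * i⁻¹) * i := by group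
    _ = a * a⁻¹⁻¹ * i := by rw [h]
    _ = a * a * i := by rw [inv_inv]
  -- squaring is "injective onto N" for elements of A
  have key : ∀ a ∈ A, a * a ∈ N → a ∈ N := by
    intro a ha h2
    obtain ⟨k, hk⟩ := hodd
    have h1 : a ^ (Nat.card A) = 1 := by
      have h := pow_card_eq_one' (G := ↥A) (x := ⟨a, ha⟩)
      have h2 := congrArg (Subgroup.subtype A) h
      simp only [Subgroup.coe_subtype, map_pow, map_one] at h2
      exact h2
    have e : (a * a) ^ (k + 1) = a := by
      rw [← sq, ← pow_mul]
      have : 2 * (k + 1) = (2 * k + 1) + 1 := by ring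
      rw [this, pow_succ, ← hk, h1, one_mul]
    have := N.pow_mem h2 (k + 1)
    rwa [e] at this
  apply le_antisymm ?_ Subgroup.le_normalizer
  intro g hg
  have hiH : i ∈ N ⊔ Subgroup.zpowers i :=
    Subgroup.mem_sup_right (Subgroup.mem_zpowers i)
  have hgi : g * i * g⁻¹ ∈ N ⊔ Subgroup.zpowers i :=
    (Subgroup.mem_normalizer_iff.mp hg i).mp hiH
  have hdec := aux_decomp i hi N hNinv _ hgi
  -- general step: if g * i * g⁻¹ = a * a * i with a ∈ A, then a ∈ N
  have main : ∀ a ∈ A, g * i * g⁻¹ = a * a * i → a ∈ N := by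
    intro a ha he
    rcases hdec with h | h
    · exfalso
      apply hiA
      rw [he] at h
      have haa : a * a ∈ A := A.mul_mem ha ha
      have : (a * a)⁻¹ * (a * a * i) ∈ A := A.mul_mem (A.inv_mem haa) (hN h)
      rwa [inv_mul_cancel_left] at this
    · rw [he, mul_assoc, hi, mul_one] at h
      exact key a ha h
  rcases hdecA g with hgA | hgAi
  · have := main g hgA (hconj g hgA)
    exact Subgroup.mem_sup_left this
  · have e : g * i * g⁻¹ = (g * i) * i * (g * i)⁻¹ := by group
    have e2 : (g * i) * i * (g * i)⁻¹ = (g * i) * (g * i) * i := hconj _ hgAi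
    have hn : g * i ∈ N := main _ hgAi (e.trans e2)
    have : (g * i) * i⁻¹ ∈ N ⊔ Subgroup.zpowers i :=
      Subgroup.mul_mem _ (Subgroup.mem_sup_left hn)
        (Subgroup.inv_mem _ hiH)
    rwa [mul_inv_cancel_right] at this
end

section
/- Let A be a finite abelian group of odd order and G = A ⋊ ⟨i⟩ the generalized dihedral group (i acting by inversion). Then every subgroup of G is either a subgroup of A, or conjugate to ⟨N, i⟩ for a unique subgroup N ≤ A. Moreover each subgroup N ≤ A is normal in G, and the conjugacy class of ⟨N, i⟩ has exactly |A:N| elements. -/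
section Aux

variable {G : Type*} [Group G] {A : Subgroup G} {i : G}

/-- Membership characterization of `N ⊔ ⟨a*i⟩` for `N ≤ A`, `a ∈ A`. -/
lemma aux_mem_sup (hcomm : ∀ a ∈ A, ∀ b ∈ A, a * b = b * a)
    (hi : i * i = 1) (hinv : ∀ a ∈ A, i * a * i⁻¹ = a⁻¹)
    {N : Subgroup G} (hN : N ≤ A) {a : G} (ha : a ∈ A) (x : G) :
    x ∈ N ⊔ Subgroup.zpowers (a * i) ↔ x ∈ N ∨ ∃ n ∈ N, x = n * (a * i) := by
  have key1 : (a * i) * (a * i) = 1 := by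
    have h1 : (a * i) * (a * i) = a * (i * a * i⁻¹) * (i * i) := by group
    rw [h1, hinv a ha, hi, mul_one, mul_inv_cancel]
  have keyinv : (a * i)⁻¹ = a * i := inv_eq_of_mul_eq_one_right key1
  have hswap : ∀ m ∈ A, (a * i) * m = m⁻¹ * (a * i) := by
    intro m hm
    have h1 : (a * i) * m * (a * i)⁻¹ = a * (i * m * i⁻¹) * a⁻¹ := by group
    rw [hinv m hm, hcomm a ha m⁻¹ (inv_mem hm)] at h1
    calc (a * i) * m = ((a * i) * m * (a * i)⁻¹) * (a * i) := by group
    _ = m⁻¹ * (a * i) := by rw [h1]; group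
  let T : Subgroup G :=
    { carrier := {x | x ∈ N ∨ ∃ n ∈ N, x = n * (a * i)}
      one_mem' := Or.inl N.one_mem
      mul_mem' := by
        rintro x y (hx | ⟨n, hn, rfl⟩) (hy | ⟨m, hm, rfl⟩)
        · exact Or.inl (N.mul_mem hx hy)
        · exact Or.inr ⟨x * m, N.mul_mem hx hm, by group⟩
        · refine Or.inr ⟨n * y⁻¹, N.mul_mem hn (N.inv_mem hy), ?_⟩
          rw [mul_assoc, hswap y (hN hy)]; group
        · refine Or.inl ?_
          have h2 : n * (a * i) * (m * (a * i)) = n * m⁻¹ := by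
            rw [show n * (a * i) * (m * (a * i)) = n * ((a * i) * m) * (a * i) by group,
              hswap m (hN hm),
              show n * (m⁻¹ * (a * i)) * (a * i) = n * m⁻¹ * ((a * i) * (a * i)) by group,
              key1, mul_one]
          rw [h2]
          exact N.mul_mem hn (N.inv_mem hm)
      inv_mem' := by
        rintro x (hx | ⟨n, hn, rfl⟩)
        · exact Or.inl (N.inv_mem hx)
        · refine Or.inr ⟨n, hn, ?_⟩
          rw [mul_inv_rev, keyinv, hswap n⁻¹ (inv_mem (hN hn)), inv_inv] }
  constructor
  · intro hx
    have hle : N ⊔ Subgroup.zpowers (a * i) ≤ T := by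
      refine sup_le (fun y hy => Or.inl hy) ?_
      rw [Subgroup.zpowers_le]
      exact Or.inr ⟨1, N.one_mem, (one_mul _).symm⟩
    exact hle hx
  · rintro (hx | ⟨n, hn, rfl⟩)
    · exact Subgroup.mem_sup_left hx
    · exact mul_mem (Subgroup.mem_sup_left hn)
        (Subgroup.mem_sup_right (Subgroup.mem_zpowers _))

lemma aux_cover (hi : i * i = 1) (hinv : ∀ a ∈ A, i * a * i⁻¹ = a⁻¹)
    (hgen : A ⊔ Subgroup.zpowers i = ⊤) (g : G) :
    g ∈ A ∨ ∃ a ∈ A, g = a * i := by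
  have hiinv : i⁻¹ = i := inv_eq_of_mul_eq_one_right hi
  have hswap0 : ∀ b ∈ A, i * b = b⁻¹ * i := by
    intro b hb
    calc i * b = (i * b * i⁻¹) * i := by group
    _ = b⁻¹ * i := by rw [hinv b hb]
  let S : Subgroup G :=
    { carrier := {x | x ∈ A ∨ ∃ a ∈ A, x = a * i}
      one_mem' := Or.inl A.one_mem
      mul_mem' := by
        rintro x y (hx | ⟨a, ha, rfl⟩) (hy | ⟨b, hb, rfl⟩)
        · exact Or.inl (A.mul_mem hx hy)
        · exact Or.inr ⟨x * b, A.mul_mem hx hb, by group⟩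
        · refine Or.inr ⟨a * y⁻¹, A.mul_mem ha (A.inv_mem hy), ?_⟩
          rw [mul_assoc, hswap0 y hy]; group
        · refine Or.inl ?_
          have h2 : a * i * (b * i) = a * b⁻¹ := by
            rw [show a * i * (b * i) = a * (i * b) * i by group, hswap0 b hb,
              show a * (b⁻¹ * i) * i = a * b⁻¹ * (i * i) by group, hi, mul_one]
          rw [h2]
          exact A.mul_mem ha (A.inv_mem hb)
      inv_mem' := by
        rintro x (hx | ⟨a, ha, rfl⟩)
        · exact Or.inl (A.inv_mem hx)
        · refine Or.inr ⟨a, ha, ?_⟩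
          rw [mul_inv_rev, hiinv, hswap0 a⁻¹ (A.inv_mem ha), inv_inv] }
  have hle : (⊤ : Subgroup G) ≤ S := by
    rw [← hgen]
    exact sup_le (fun y hy => Or.inl hy)
      (by rw [Subgroup.zpowers_le]; exact Or.inr ⟨1, A.one_mem, (one_mul i).symm⟩)
  exact hle trivial

lemma aux_normal (hcomm : ∀ a ∈ A, ∀ b ∈ A, a * b = b * a)
    (hi : i * i = 1) (hinv : ∀ a ∈ A, i * a * i⁻¹ = a⁻¹)
    (hgen : A ⊔ Subgroup.zpowers i = ⊤)
    {N : Subgroup G} (hN : N ≤ A) : N.Normal := by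
  constructor
  intro n hn g
  rcases aux_cover hi hinv hgen g with hg | ⟨a, ha, rfl⟩
  · have : g * n * g⁻¹ = n := by
      rw [← hcomm n (hN hn) g hg]; group
    rw [this]; exact hn
  · have h1 : (a * i) * n * (a * i)⁻¹ = a * (i * n * i⁻¹) * a⁻¹ := by group
    have h2 : (a * i) * n * (a * i)⁻¹ = n⁻¹ := by
      rw [h1, hinv n (hN hn), hcomm a ha n⁻¹ (inv_mem (hN hn)), mul_assoc,
        mul_inv_cancel, mul_one]
    rw [h2]; exact N.inv_mem hn

/-- conjugate of `N ⊔ ⟨j⟩` is `N ⊔ ⟨g j g⁻¹⟩` when `N` is normal. -/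
lemma aux_conj_map {N : Subgroup G} (hN : N.Normal) (g j : G) :
    Subgroup.map (MulAut.conj g).toMonoidHom (N ⊔ Subgroup.zpowers j)
      = N ⊔ Subgroup.zpowers (g * j * g⁻¹) := by
  rw [Subgroup.map_sup, MonoidHom.map_zpowers]
  have h1 : Subgroup.map (MulAut.conj g).toMonoidHom N = N := by
    ext x
    simp only [Subgroup.mem_map]
    constructor
    · rintro ⟨n, hn, rfl⟩
      exact hN.conj_mem n hn g
    · intro hx
      exact ⟨g⁻¹ * x * g, by simpa using hN.conj_mem x hx g⁻¹,
        show g * (g⁻¹ * x * g) * g⁻¹ = x by group⟩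
  rw [h1]
  rfl

lemma aux_conj_elt (hi : i * i = 1) (hinv : ∀ a ∈ A, i * a * i⁻¹ = a⁻¹)
    (hgen : A ⊔ Subgroup.zpowers i = ⊤) (g : G) :
    ∃ b ∈ A, g * i * g⁻¹ = (b * b) * i := by
  have key : ∀ b ∈ A, b * i * b⁻¹ = (b * b) * i := by
    intro b hb
    have h1 : b * i * b⁻¹ = b * (i * b⁻¹ * i⁻¹) * i := by group
    rw [h1, hinv b⁻¹ (A.inv_mem hb), inv_inv]
  rcases aux_cover hi hinv hgen g with hg | ⟨b, hb, rfl⟩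
  · exact ⟨g, hg, key g hg⟩
  · refine ⟨b, hb, ?_⟩
    have h2 : b * i * i * (b * i)⁻¹ = b * i * b⁻¹ := by group
    rw [h2, key b hb]

end Aux

/-- In the generalized dihedral group `G = A ⋊ ⟨i⟩` of a finite abelian group
`A` of odd order: every subgroup of `G` is either contained in `A`, or
conjugate to `⟨N, i⟩` for a unique subgroup `N ≤ A`; moreover every subgroup
`N ≤ A` is normal in `G`, and the conjugacy class of `⟨N, i⟩` has exactly
`|A : N|` elements. -/
theorem gen_dihedral_subgroup_classification
    (G : Type*) [Group G] [Fintype G] (A : Subgroup G) (i : G)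
    (hcomm : ∀ a ∈ A, ∀ b ∈ A, a * b = b * a)
    (hodd : Odd (Nat.card A))
    (hi : i * i = 1) (hiA : i ∉ A)
    (hinv : ∀ a ∈ A, i * a * i⁻¹ = a⁻¹)
    (hgen : A ⊔ Subgroup.zpowers i = ⊤) :
    (∀ K : Subgroup G, K ≤ A ∨
        ∃! N : Subgroup G, N ≤ A ∧
          ∃ g : G, K = Subgroup.map (MulAut.conj g).toMonoidHom
            (N ⊔ Subgroup.zpowers i)) ∧
      (∀ N : Subgroup G, N ≤ A → N.Normal) ∧
      (∀ N : Subgroup G, N ≤ A →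
        Nat.card {K : Subgroup G //
            ∃ g : G, K = Subgroup.map (MulAut.conj g).toMonoidHom
              (N ⊔ Subgroup.zpowers i)} = (N.subgroupOf A).index) := by
  have hiinv : i⁻¹ = i := inv_eq_of_mul_eq_one_right hi
  -- squaring is surjective on A
  have hsq : ∀ a ∈ A, ∃ b ∈ A, b * b = a := by
    intro a ha
    obtain ⟨m, hm⟩ := hodd
    set a' : A := ⟨a, ha⟩ with ha'
    refine ⟨(a' ^ (m + 1) : A), ((a' ^ (m + 1) : A)).2, ?_⟩
    have h1 : a' ^ (m + 1) * a' ^ (m + 1) = a' ^ (2 * m + 1) * a' := by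
      rw [← pow_add, ← pow_succ]
      congr 1
      ring
    rw [← hm, pow_card_eq_one', one_mul] at h1
    have h3 : ((a' ^ (m + 1) * a' ^ (m + 1) : A) : G) = (a' : G) := congrArg Subtype.val h1
    push_cast at h3
    push_cast
    rw [← pow_add] at h3 ⊢
    exact h3
  -- elements of the form a*i are not in A
  have hnotA : ∀ a ∈ A, a * i ∉ A := by
    intro a ha h
    exact hiA (by simpa using A.mul_mem (A.inv_mem ha) h)
  refine ⟨?_, fun N hN => aux_normal hcomm hi hinv hgen hN, ?_⟩
  · -- classification
    intro K
    by_cases hK : K ≤ A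
    · exact Or.inl hK
    right
    obtain ⟨k, hkK, hkA⟩ := SetLike.not_le_iff_exists.mp hK
    obtain ⟨a, ha, rfl⟩ := (aux_cover hi hinv hgen k).resolve_left hkA
    have hN₀A : K ⊓ A ≤ A := inf_le_right
    have hNnorm : (K ⊓ A).Normal := aux_normal hcomm hi hinv hgen hN₀A
    have hKeq : K = (K ⊓ A) ⊔ Subgroup.zpowers (a * i) := by
      apply le_antisymm
      · intro x hx
        rw [aux_mem_sup hcomm hi hinv hN₀A ha]
        by_cases hxA : x ∈ A
        · exact Or.inl (Subgroup.mem_inf.mpr ⟨hx, hxA⟩)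
        · obtain ⟨c, hc, rfl⟩ := (aux_cover hi hinv hgen x).resolve_left hxA
          refine Or.inr ⟨c * a⁻¹, Subgroup.mem_inf.mpr
            ⟨?_, A.mul_mem hc (A.inv_mem ha)⟩, by group⟩
          have h3 : c * a⁻¹ = (c * i) * (a * i)⁻¹ := by group
          rw [h3]
          exact K.mul_mem hx (K.inv_mem hkK)
      · refine sup_le inf_le_left ?_
        rw [Subgroup.zpowers_le]
        exact hkK
    have hchar : ∀ N : Subgroup G, N ≤ A →
        (∃ g : G, K = Subgroup.map (MulAut.conj g).toMonoidHom
          (N ⊔ Subgroup.zpowers i)) → N = K ⊓ A := by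
      rintro N hNA ⟨g, hg⟩
      have hNnorm' : N.Normal := aux_normal hcomm hi hinv hgen hNA
      obtain ⟨b, hb, hbg⟩ := aux_conj_elt hi hinv hgen g
      rw [aux_conj_map hNnorm', hbg] at hg
      have hbbA : b * b ∈ A := A.mul_mem hb hb
      apply le_antisymm
      · intro x hx
        exact Subgroup.mem_inf.mpr ⟨hg ▸ Subgroup.mem_sup_left hx, hNA hx⟩
      · intro x hx
        obtain ⟨hx1, hx2⟩ := Subgroup.mem_inf.mp hx
        rw [hg, aux_mem_sup hcomm hi hinv hNA hbbA] at hx1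
        rcases hx1 with h | ⟨n, hn, rfl⟩
        · exact h
        · refine absurd (show (b * b) * i ∈ A from ?_) (hnotA _ hbbA)
          have h4 : (b * b) * i = n⁻¹ * (n * (b * b * i)) := by group
          rw [h4]
          exact A.mul_mem (A.inv_mem (hNA hn)) hx2
    refine ⟨K ⊓ A, ⟨inf_le_right, ?_⟩, fun N hN => hchar N hN.1 hN.2⟩
    obtain ⟨b, hb, hbb⟩ := hsq a ha
    refine ⟨b, ?_⟩
    rw [aux_conj_map hNnorm]
    have hbi : b * i * b⁻¹ = a * i := by
      have h1 : b * i * b⁻¹ = b * (i * b⁻¹ * i⁻¹) * i := by group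
      rw [h1, hinv b⁻¹ (A.inv_mem hb), inv_inv, hbb]
    rw [hbi]
    exact hKeq
  · -- counting
    intro N hN
    have hNnorm : N.Normal := aux_normal hcomm hi hinv hgen hN
    set N' := N.subgroupOf A with hN'
    have hprop : ∀ a : A, ∃ g : G, (N ⊔ Subgroup.zpowers ((a : G) * i)) =
        Subgroup.map (MulAut.conj g).toMonoidHom (N ⊔ Subgroup.zpowers i) := by
      intro a
      obtain ⟨b, hb, hbb⟩ := hsq (a : G) a.2
      refine ⟨b, ?_⟩
      rw [aux_conj_map hNnorm]
      have hbi : b * i * b⁻¹ = (a : G) * i := by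
        have h1 : b * i * b⁻¹ = b * (i * b⁻¹ * i⁻¹) * i := by group
        rw [h1, hinv b⁻¹ (A.inv_mem hb), inv_inv, hbb]
      rw [hbi]
    let φ : A → {K : Subgroup G //
        ∃ g : G, K = Subgroup.map (MulAut.conj g).toMonoidHom
          (N ⊔ Subgroup.zpowers i)} :=
      fun a => ⟨N ⊔ Subgroup.zpowers ((a : G) * i), hprop a⟩
    have hcrit : ∀ a a' : A,
        (N ⊔ Subgroup.zpowers ((a : G) * i) = N ⊔ Subgroup.zpowers ((a' : G) * i))
          ↔ a⁻¹ * a' ∈ N' := by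
      intro a a'
      constructor
      · intro h
        have hmem : (a' : G) * i ∈ N ⊔ Subgroup.zpowers ((a : G) * i) := by
          rw [h]
          exact Subgroup.mem_sup_right (Subgroup.mem_zpowers _)
        rw [aux_mem_sup hcomm hi hinv hN a.2] at hmem
        rcases hmem with hx | ⟨n, hn, hx⟩
        · exact absurd (hN hx) (hnotA _ a'.2)
        · have hval : (a' : G) * (a : G)⁻¹ ∈ N := by
            have hn' : n = (a' : G) * (a : G)⁻¹ := by
              calc n = ((a' : G) * i) * ((a : G) * i)⁻¹ := by rw [hx]; group
              _ = (a' : G) * (a : G)⁻¹ := by group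
            rw [← hn']
            exact hn
          have h6 : ((a⁻¹ * a' : A) : G) ∈ N := by
            push_cast
            rw [hcomm _ (A.inv_mem a.2) _ a'.2]
            exact hval
          simpa [hN', Subgroup.mem_subgroupOf] using h6
      · intro h
        have hval : (a' : G) * (a : G)⁻¹ ∈ N := by
          have h2 : ((a⁻¹ * a' : A) : G) ∈ N := by
            simpa [hN', Subgroup.mem_subgroupOf] using h
          push_cast at h2
          rwa [hcomm _ (A.inv_mem a.2) _ a'.2] at h2
        have key : ∀ c c' : A, (c' : G) * (c : G)⁻¹ ∈ N →
            N ⊔ Subgroup.zpowers ((c' : G) * i) ≤ N ⊔ Subgroup.zpowers ((c : G) * i) := by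
          intro c c' hcc
          refine sup_le le_sup_left ?_
          rw [Subgroup.zpowers_le, aux_mem_sup hcomm hi hinv hN c.2]
          exact Or.inr ⟨(c' : G) * (c : G)⁻¹, hcc, by group⟩
        have hval' : (a : G) * (a' : G)⁻¹ ∈ N := by
          have h7 := N.inv_mem hval
          rwa [show ((a' : G) * (a : G)⁻¹)⁻¹ = (a : G) * (a' : G)⁻¹ by group] at h7
        exact le_antisymm (key a' a hval') (key a a' hval)
    have hwd : ∀ a a' : A, (QuotientGroup.leftRel N').r a a' → φ a = φ a' := by
      intro a a' h
      rw [QuotientGroup.leftRel_apply] at h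
      exact Subtype.ext ((hcrit a a').mpr h)
    let f : A ⧸ N' → {K : Subgroup G //
        ∃ g : G, K = Subgroup.map (MulAut.conj g).toMonoidHom
          (N ⊔ Subgroup.zpowers i)} := Quotient.lift φ hwd
    have hbij : Function.Bijective f := by
      constructor
      · intro x y
        induction x using Quotient.inductionOn with
        | h a =>
        induction y using Quotient.inductionOn with
        | h a' =>
        intro h
        have h0 : φ a = φ a' := h
        have h2 : a⁻¹ * a' ∈ N' := (hcrit a a').mp (congrArg Subtype.val h0)
        exact Quotient.sound ((QuotientGroup.leftRel_apply).mpr h2)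
      · rintro ⟨K, g, hg⟩
        obtain ⟨b, hb, hbg⟩ := aux_conj_elt hi hinv hgen g
        rw [aux_conj_map hNnorm, hbg] at hg
        refine ⟨Quotient.mk _ (⟨b * b, A.mul_mem hb hb⟩ : A), ?_⟩
        exact Subtype.ext hg.symm
    rw [← Nat.card_eq_of_bijective f hbij]
    rfl
end
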